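/- Let p, a, b ∈ [0,1] with a + b − p·a·b ≤ 1, and let (ξ, ξ′) be a pair of {0,1}-valued random variables with joint law ℙ(ξ=ξ′=1) = p·a·b, ℙ(ξ=1, ξ′=0) = a − p·a·b, ℙ(ξ=0, ξ′=1) = b − p·a·b, ℙ(ξ=ξ′=0) = 1 − a − b + p·a·b. If Y is a Bernoulli(p) random variable independent of the pair (ξ, ξ′), then the random variables Y·ξ and Y·ξ′ are independent, with Y·ξ ~ Bernoulli(p·a) and Y·ξ′ ~ Bernoulli(p·b). -/

import Mathlib

open MeasureTheory ProbabilityTheory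
open scoped ENNReal Classical

/-- Bernoulli(p) law on ℝ (mass p at 1, mass 1-p at 0). -/
noncomputable def bernoulliReal (p : ℝ) : Measure ℝ :=
  ENNReal.ofReal p • Measure.dirac 1 + ENNReal.ofReal (1 - p) • Measure.dirac 0

lemma bernoulliReal_apply (p : ℝ) {s : Set ℝ} (hs : MeasurableSet s) :
    bernoulliReal p s = ENNReal.ofReal p * s.indicator 1 1
      + ENNReal.ofReal (1 - p) * s.indicator 1 0 := by
  simp [bernoulliReal, Measure.dirac_apply' _ hs]

lemma indicator_preimage_aux {Ω : Type*} (A : Set Ω) (s : Set ℝ) :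
    (A.indicator (fun _ => (1:ℝ))) ⁻¹' s =
      (if (1:ℝ) ∈ s then A else ∅) ∪ (if (0:ℝ) ∈ s then Aᶜ else ∅) := by
  ext ω
  by_cases h : ω ∈ A <;>
    simp [Set.indicator_of_mem, Set.indicator_of_notMem, h] <;>
    split_ifs <;> simp_all

lemma map_indicator_bern {Ω : Type*} [MeasurableSpace Ω] {μ : Measure Ω} [IsProbabilityMeasure μ]
    {A : Set Ω} (hA : MeasurableSet A) {q : ℝ} (hq0 : 0 ≤ q) (hq1 : q ≤ 1)
    (hμA : μ A = ENNReal.ofReal q) :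
    μ.map (A.indicator (fun _ => (1:ℝ))) = bernoulliReal q := by
  have hm : Measurable (A.indicator (fun _ => (1:ℝ))) := measurable_const.indicator hA
  ext s hs
  rw [Measure.map_apply hm hs, indicator_preimage_aux, bernoulliReal_apply q hs]
  have hAc : μ Aᶜ = ENNReal.ofReal (1 - q) := by
    rw [measure_compl hA (measure_ne_top μ A), hμA, measure_univ,
      ← ENNReal.ofReal_one, ← ENNReal.ofReal_sub 1 hq0]
  by_cases h1 : (1:ℝ) ∈ s <;> by_cases h0 : (0:ℝ) ∈ s <;>
    simp [h1, h0, hμA, hAc, Set.indicator_of_mem, Set.indicator_of_notMem]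
  rw [← ENNReal.ofReal_add hq0 (by linarith)]
  norm_num

lemma indepFun_indicator {Ω : Type*} [MeasurableSpace Ω] {μ : Measure Ω} [IsProbabilityMeasure μ]
    {A B : Set Ω} (hA : MeasurableSet A) (hB : MeasurableSet B)
    (h : μ (A ∩ B) = μ A * μ B) :
    IndepFun (A.indicator (fun _ => (1:ℝ))) (B.indicator (fun _ => (1:ℝ))) μ := by
  have hI : IndepSet A B μ := (indepSet_iff_measure_inter_eq_mul hA hB μ).mpr h
  have hI' : Indep (MeasurableSpace.generateFrom {A}) (MeasurableSpace.generateFrom {B}) μ := hI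
  have hle : ∀ (C : Set Ω), MeasurableSpace.comap (C.indicator (fun _ => (1:ℝ)))
      (borel ℝ) ≤ MeasurableSpace.generateFrom {C} := by
    intro C
    intro t ht
    obtain ⟨s, hs, rfl⟩ := ht
    rw [indicator_preimage_aux]
    have hC : MeasurableSet[MeasurableSpace.generateFrom {C}] C :=
      MeasurableSpace.measurableSet_generateFrom rfl
    split_ifs <;> simp_all [MeasurableSet.union, MeasurableSet.compl, hC]
  exact indep_of_indep_of_le_left (indep_of_indep_of_le_right hI' (hle B)) (hle A)

/-- splitting a Bernoulli(p) variable.  If `(ξ, ξ′)` has the given joint law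
and `Y ~ Bernoulli(p)` is independent of `(ξ, ξ′)`, then `Y ξ` and `Y ξ′` are independent
with laws `Bernoulli(p a)` and `Bernoulli(p b)`. -/
theorem statement0 {Ω : Type*} [MeasurableSpace Ω] (μ : Measure Ω) [IsProbabilityMeasure μ]
    (p a b : ℝ) (hp : p ∈ Set.Icc (0:ℝ) 1) (ha : a ∈ Set.Icc (0:ℝ) 1)
    (hb : b ∈ Set.Icc (0:ℝ) 1) (hab : a + b - p * a * b ≤ 1)
    (ξ ξ' Y : Ω → ℝ)
    (hmξ : Measurable ξ) (hmξ' : Measurable ξ') (hmY : Measurable Y)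
    (hξ01 : ∀ ω, ξ ω = 0 ∨ ξ ω = 1) (hξ'01 : ∀ ω, ξ' ω = 0 ∨ ξ' ω = 1)
    (h11 : μ {ω | ξ ω = 1 ∧ ξ' ω = 1} = ENNReal.ofReal (p * a * b))
    (h10 : μ {ω | ξ ω = 1 ∧ ξ' ω = 0} = ENNReal.ofReal (a - p * a * b))
    (h01 : μ {ω | ξ ω = 0 ∧ ξ' ω = 1} = ENNReal.ofReal (b - p * a * b))
    (h00 : μ {ω | ξ ω = 0 ∧ ξ' ω = 0} = ENNReal.ofReal (1 - a - b + p * a * b))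
    (hY : μ.map Y = bernoulliReal p)
    (hindep : IndepFun Y (fun ω => (ξ ω, ξ' ω)) μ) :
    IndepFun (fun ω => Y ω * ξ ω) (fun ω => Y ω * ξ' ω) μ ∧
    μ.map (fun ω => Y ω * ξ ω) = bernoulliReal (p * a) ∧
    μ.map (fun ω => Y ω * ξ' ω) = bernoulliReal (p * b) := by
  obtain ⟨hp0, hp1⟩ := hp
  obtain ⟨ha0, ha1⟩ := ha
  obtain ⟨hb0, hb1⟩ := hb
  have hpab0 : 0 ≤ p * a * b := by positivity
  have hapab : 0 ≤ a - p * a * b := by nlinarith [mul_nonneg ha0 (sub_nonneg.mpr (show p * b ≤ 1 by nlinarith))]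
  have hbpab : 0 ≤ b - p * a * b := by nlinarith [mul_nonneg hb0 (sub_nonneg.mpr (show p * a ≤ 1 by nlinarith))]
  set A : Set Ω := Y ⁻¹' {1} ∩ ξ ⁻¹' {1} with hAdef
  set B : Set Ω := Y ⁻¹' {1} ∩ ξ' ⁻¹' {1} with hBdef
  have mA : MeasurableSet A := (hmY (measurableSet_singleton 1)).inter
    (hmξ (measurableSet_singleton 1))
  have mB : MeasurableSet B := (hmY (measurableSet_singleton 1)).inter
    (hmξ' (measurableSet_singleton 1))
  -- measure of Y = 1
  have hY1 : μ (Y ⁻¹' {1}) = ENNReal.ofReal p := by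
    rw [← Measure.map_apply hmY (measurableSet_singleton 1), hY,
      bernoulliReal_apply p (measurableSet_singleton 1)]
    norm_num
  -- ξ marginal
  have hξa : μ (ξ ⁻¹' {1}) = ENNReal.ofReal a := by
    have hsplit : ξ ⁻¹' {1} = {ω | ξ ω = 1 ∧ ξ' ω = 1} ∪ {ω | ξ ω = 1 ∧ ξ' ω = 0} := by
      ext ω
      rcases hξ'01 ω with h | h <;> simp [h]
    have hdisj : Disjoint {ω | ξ ω = 1 ∧ ξ' ω = 1} {ω | ξ ω = 1 ∧ ξ' ω = 0} := by
      rw [Set.disjoint_left]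
      rintro ω ⟨-, h1⟩ ⟨-, h0⟩
      rw [h1] at h0; norm_num at h0
    have hm2 : MeasurableSet {ω | ξ ω = 1 ∧ ξ' ω = 0} := by
      have : {ω | ξ ω = 1 ∧ ξ' ω = 0} = ξ ⁻¹' {1} ∩ ξ' ⁻¹' {0} := rfl
      rw [this]
      exact (hmξ (measurableSet_singleton 1)).inter (hmξ' (measurableSet_singleton 0))
    rw [hsplit, measure_union hdisj hm2, h11, h10,
      ← ENNReal.ofReal_add hpab0 hapab]
    ring_nf
  have hξ'b : μ (ξ' ⁻¹' {1}) = ENNReal.ofReal b := by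
    have hsplit : ξ' ⁻¹' {1} = {ω | ξ ω = 1 ∧ ξ' ω = 1} ∪ {ω | ξ ω = 0 ∧ ξ' ω = 1} := by
      ext ω
      rcases hξ01 ω with h | h <;> simp [h]
    have hdisj : Disjoint {ω | ξ ω = 1 ∧ ξ' ω = 1} {ω | ξ ω = 0 ∧ ξ' ω = 1} := by
      rw [Set.disjoint_left]
      rintro ω ⟨h1, -⟩ ⟨h0, -⟩
      rw [h1] at h0; norm_num at h0
    have hm2 : MeasurableSet {ω | ξ ω = 0 ∧ ξ' ω = 1} := by
      have : {ω | ξ ω = 0 ∧ ξ' ω = 1} = ξ ⁻¹' {0} ∩ ξ' ⁻¹' {1} := rfl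
      rw [this]
      exact (hmξ (measurableSet_singleton 0)).inter (hmξ' (measurableSet_singleton 1))
    rw [hsplit, measure_union hdisj hm2, h11, h01,
      ← ENNReal.ofReal_add hpab0 hbpab]
    ring_nf
  -- independence consequences
  have hmul := hindep.measure_inter_preimage_eq_mul
  have hμA : μ A = ENNReal.ofReal (p * a) := by
    have hpre : (fun ω => (ξ ω, ξ' ω)) ⁻¹' (({1} : Set ℝ) ×ˢ (Set.univ : Set ℝ))
        = ξ ⁻¹' {1} := by ext ω; simp [eq_comm]
    have := hmul {1} (({1} : Set ℝ) ×ˢ (Set.univ : Set ℝ)) (measurableSet_singleton 1)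
      ((measurableSet_singleton 1).prod MeasurableSet.univ)
    rw [hpre] at this
    rw [hAdef, this, hY1, hξa, ← ENNReal.ofReal_mul hp0]
  have hμB : μ B = ENNReal.ofReal (p * b) := by
    have hpre : (fun ω => (ξ ω, ξ' ω)) ⁻¹' ((Set.univ : Set ℝ) ×ˢ ({1} : Set ℝ))
        = ξ' ⁻¹' {1} := by ext ω; simp [eq_comm]
    have := hmul {1} ((Set.univ : Set ℝ) ×ˢ ({1} : Set ℝ)) (measurableSet_singleton 1)
      (MeasurableSet.univ.prod (measurableSet_singleton 1))
    rw [hpre] at this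
    rw [hBdef, this, hY1, hξ'b, ← ENNReal.ofReal_mul hp0]
  have hμAB : μ (A ∩ B) = μ A * μ B := by
    have hpre : (fun ω => (ξ ω, ξ' ω)) ⁻¹' (({1} : Set ℝ) ×ˢ ({1} : Set ℝ))
        = {ω | ξ ω = 1 ∧ ξ' ω = 1} := by ext ω; simp
    have hABeq : A ∩ B = Y ⁻¹' {1} ∩ (fun ω => (ξ ω, ξ' ω)) ⁻¹' (({1} : Set ℝ) ×ˢ ({1} : Set ℝ)) := by
      rw [hpre, hAdef, hBdef]; ext ω; simp; tauto
    have := hmul {1} (({1} : Set ℝ) ×ˢ ({1} : Set ℝ)) (measurableSet_singleton 1)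
      ((measurableSet_singleton 1).prod (measurableSet_singleton 1))
    rw [hpre] at this
    rw [hABeq, hpre, this, hY1, h11, hμA, hμB, ← ENNReal.ofReal_mul hp0,
      ← ENNReal.ofReal_mul (by positivity)]
    congr 1
    ring
  have hIndep0 : IndepFun (A.indicator (fun _ => (1:ℝ))) (B.indicator (fun _ => (1:ℝ))) μ :=
    indepFun_indicator mA mB hμAB
  -- Y is a.e. {0,1}-valued
  have hYae : ∀ᵐ ω ∂μ, Y ω = 0 ∨ Y ω = 1 := by
    have hms : MeasurableSet (({0, 1} : Set ℝ)ᶜ) := (by measurability : MeasurableSet ({0,1} : Set ℝ)).compl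
    have h0 : μ (Y ⁻¹' ({0, 1} : Set ℝ)ᶜ) = 0 := by
      rw [← Measure.map_apply hmY hms, hY, bernoulliReal_apply p hms]
      norm_num
    rw [ae_iff]
    have heq : {ω | ¬(Y ω = 0 ∨ Y ω = 1)} = Y ⁻¹' ({0, 1} : Set ℝ)ᶜ := by
      ext ω; simp [not_or]
    rw [heq]; exact h0
  -- a.e. identification with indicators
  have hae1 : (fun ω => Y ω * ξ ω) =ᵐ[μ] A.indicator (fun _ => (1:ℝ)) := by
    filter_upwards [hYae] with ω hω
    rcases hω with h | h
    · have : ω ∉ A := by simp [hAdef, h]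
      simp [h, Set.indicator_of_notMem this]
    · rcases hξ01 ω with h2 | h2
      · have : ω ∉ A := by simp [hAdef, h2]
        simp [h2, Set.indicator_of_notMem this]
      · have : ω ∈ A := by simp [hAdef, h, h2]
        simp [h, h2, Set.indicator_of_mem this]
  have hae2 : (fun ω => Y ω * ξ' ω) =ᵐ[μ] B.indicator (fun _ => (1:ℝ)) := by
    filter_upwards [hYae] with ω hω
    rcases hω with h | h
    · have : ω ∉ B := by simp [hBdef, h]
      simp [h, Set.indicator_of_notMem this]
    · rcases hξ'01 ω with h2 | h2
      · have : ω ∉ B := by simp [hBdef, h2]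
        simp [h2, Set.indicator_of_notMem this]
      · have : ω ∈ B := by simp [hBdef, h, h2]
        simp [h, h2, Set.indicator_of_mem this]
  refine ⟨hIndep0.congr hae1.symm hae2.symm, ?_, ?_⟩
  · rw [Measure.map_congr hae1]
    exact map_indicator_bern mA (by positivity) (by nlinarith) hμA
  · rw [Measure.map_congr hae2]
    exact map_indicator_bern mB (by positivity) (by nlinarith) hμB
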